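/- Let s be an infinite 7/5⁺-power-free word over {a,b,c,d} and suppose g(s) contains a factor pq with period |p| and exponent |pq|/|p| ≥ 7/4, where |p| ≤ |q|. If the square pp is parsed as pp = (u₁ g(s') v₁)(u₁ g(s') v₁) with v₁u₁ = g(α) for some letter α and s' nonempty, then s'αs' is a factor of s, and since s is 7/5⁺-free, |u₁| ≤ 60 and |v₁| ≤ 53, contradicting |v₁u₁| = 160. Hence no such repetition with |p| ≤ |q| and s' nonempty exists in g(s). -/

import Mathlib

def HasPeriod {A : Type*} (w : List A) (p : ℕ) : Prop :=
  1 ≤ p ∧ ∀ i, i + p < w.length → w[i]? = w[i + p]?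

noncomputable def period {A : Type*} (w : List A) : ℕ :=
  sInf {p | HasPeriod w p}

noncomputable def exponent {A : Type*} (w : List A) : ℚ :=
  (w.length : ℚ) / (period w : ℚ)

/-- `w` is a finite factor of the infinite word `f`. -/
def FactorOf {A : Type*} (w : List A) (f : ℕ → A) : Prop :=
  ∃ i, w = (List.range w.length).map (fun k => f (i + k))

def ga : List (Fin 3) := [0,1,0,2,1,0,1,2,0,2,1,0,2,0,1,0,2,1,0,1,2,1,0,2,0,1,2,0,2,1,0,1,2,0,1,0,2,1,2,0,1,2,1,0,2,0,1,2,0,2,1,0,1,2,1,0,2,0,2,1,2,0,1,2,1,0,2,0,1,2,0,2,1,0,1,2,1,0,2,0,1,0,2,1,0,1,2,0,2,1,0,2,0,1,2,1,0,2,1,2,0,1,0,2,1,0,1,0,1,2,1,0,2,1,2,0,1,0,2,1,0,1,2,1,0,2,0,1,2,0,2,1,0,1,2,0,1,0,2,1,2,0,1,2,1,0,2,0,1,0,2,1,0,1,2,1,0,2,1,2]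
def gb : List (Fin 3) := [0,1,0,2,1,0,1,2,0,2,1,0,2,0,1,0,2,1,0,1,2,1,0,2,0,1,2,0,2,1,0,1,2,0,1,0,2,1,2,0,1,2,1,0,2,0,1,2,0,2,1,0,1,2,1,0,2,2,1,0,2,1,2,0,1,0,2,1,0,1,2,1,0,2,0,1,0,2,1,2,0,1,2,1,0,2,0,1,2,0,2,1,0,1,2,1,0,2,0,1,0,2,1,0,1,2,0,0,1,2,1,0,2,1,2,0,1,0,2,1,0,1,2,1,0,2,0,1,2,0,2,1,0,1,2,0,1,0,2,1,2,0,1,2,1,0,2,0,1,0,2,1,0,1,2,1,0,2,1,2]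
def gc : List (Fin 3) := [0,1,0,2,1,0,1,2,0,2,1,0,2,0,1,0,2,1,0,1,2,1,0,2,0,1,2,0,2,1,0,1,2,0,1,0,2,1,2,0,1,2,1,0,2,0,1,0,2,1,0,1,2,0,2,1,0,2,0,1,0,1,0,2,1,0,1,2,0,2,1,0,2,0,1,2,1,0,2,1,2,0,1,0,2,1,0,1,2,1,0,2,0,1,0,2,1,2,0,1,2,1,0,2,0,1,2,0,2,1,2,1,0,2,0,1,0,2,1,2,0,1,2,1,0,2,0,1,2,0,2,1,0,1,2,0,1,0,2,1,2,0,1,2,1,0,2,0,1,0,2,1,0,1,2,1,0,2,1,2]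
def gd : List (Fin 3) := [0,1,0,2,1,0,1,2,0,2,1,0,2,0,1,0,2,1,0,1,2,1,0,2,0,1,2,0,2,1,0,1,2,0,1,0,2,1,2,0,1,2,1,0,2,0,1,0,2,1,0,1,2,0,2,1,0,2,0,1,1,2,0,1,0,2,1,0,1,2,1,0,2,0,1,0,2,1,2,0,1,2,1,0,2,0,1,2,0,2,1,0,1,2,1,0,2,0,1,0,2,1,0,1,2,0,2,1,0,2,2,1,0,2,0,1,0,2,1,2,0,1,2,1,0,2,0,1,2,0,2,1,0,1,2,0,1,0,2,1,2,0,1,2,1,0,2,0,1,0,2,1,0,1,2,1,0,2,1,2]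

def g : Fin 4 → List (Fin 3) := ![ga, gb, gc, gd]

noncomputable def gInf (s : ℕ → Fin 4) (n : ℕ) : Fin 3 :=
  (g (s (n / 160))).getD (n % 160) 0

set_option maxRecDepth 10000 in
lemma glen : ∀ c : Fin 4, (g c).length = 160 := by decide

set_option maxRecDepth 10000 in
lemma gInj : ∀ x y : Fin 4, g x = g y → x = y := by decide

lemma get?_factor {A : Type*} (f : ℕ → A) {i n j : ℕ} (h : j < n) :
    ((List.range n).map (fun k => f (i + k)))[j]? = some (f (i + j)) := by
  rw [List.getElem?_map, List.getElem?_range h]; rfl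

theorem stmt8 (s : ℕ → Fin 4)
    (hfree : ∀ w : List (Fin 4), w ≠ [] → FactorOf w s → exponent w ≤ 7/5)
    (p q : List (Fin 3)) (hpq : FactorOf (p ++ q) (gInf s))
    (hper : period (p ++ q) = p.length)
    (hexp : 7/4 ≤ exponent (p ++ q))
    (hle : p.length ≤ q.length)
    (u₁ v₁ : List (Fin 3)) (s' : List (Fin 4)) (α : Fin 4)
    (hs' : s' ≠ [])
    (hparse : p = u₁ ++ (s'.map g).flatten ++ v₁)
    (hcode : v₁ ++ u₁ = g α) : False := by
  classical
  set k := s'.length with hk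
  have hk1 : 1 ≤ k := List.length_pos_iff.mpr hs'
  -- length of the join
  have hjoin : ((s'.map g).flatten).length = 160 * k := by
    rw [List.length_flatten, List.map_map]
    have h1 : (List.length ∘ g) = fun _ : Fin 4 => 160 := funext fun c => glen c
    rw [h1, List.map_const', List.sum_replicate, smul_eq_mul, hk, Nat.mul_comm]
  have hcl : v₁.length + u₁.length = 160 := by
    have h2 := congrArg List.length hcode
    rw [List.length_append, glen] at h2
    exact h2
  have hplen : p.length = 160 * (k + 1) := by
    rw [hparse, List.length_append, List.length_append, hjoin]
    omega
  -- the period hypothesis, concretely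
  have hnonempty : HasPeriod (p ++ q) (p ++ q).length := by
    refine ⟨?_, fun j h => absurd h (by omega)⟩
    rw [List.length_append]; omega
  have hHP : HasPeriod (p ++ q) p.length := by
    rw [← hper]
    exact Nat.sInf_mem (s := {n | HasPeriod (p ++ q) n}) ⟨_, hnonempty⟩
  obtain ⟨i, hi⟩ := hpq
  have hkey : ∀ j, j < q.length → gInf s (i + j) = gInf s (i + (j + p.length)) := by
    intro j hj
    have hL : j + p.length < (p ++ q).length := by rw [List.length_append]; omega
    have h1 := hHP.2 j hL
    rw [hi, get?_factor (gInf s) (by rw [List.length_append]; omega),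
      get?_factor (gInf s) (by rw [List.length_append]; omega)] at h1
    exact Option.some.inj h1
  set N := i / 160 with hN
  have hblock : ∀ m, N + 1 ≤ m → m ≤ N + k → s m = s (m + (k + 1)) := by
    intro m hm1 hm2
    apply gInj
    apply List.ext_getElem (by rw [glen, glen])
    intro r hr1 hr2
    have hr : r < 160 := by rw [glen] at hr1; exact hr1
    have hr2' : r < 160 := hr
    have hj : 160 * m + r - i < q.length := by omega
    have h2 := hkey (160 * m + r - i) hj
    have e3 : i + (160 * m + r - i) = 160 * m + r := by omega
    have e4 : i + (160 * m + r - i + p.length) = 160 * (m + (k + 1)) + r := by omega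
    rw [e3, e4] at h2
    have d1 : (160 * m + r) / 160 = m := by omega
    have d2 : (160 * m + r) % 160 = r := by omega
    have d3 : (160 * (m + (k + 1)) + r) / 160 = m + (k + 1) := by omega
    have d4 : (160 * (m + (k + 1)) + r) % 160 = r := by omega
    simp only [gInf, d1, d2, d3, d4] at h2
    rw [← List.getD_eq_getElem (g (s m)) 0 hr1, ← List.getD_eq_getElem _ 0 hr2]
    exact h2
  -- the word s' α s' (as a factor of s directly)
  set W : List (Fin 4) := (List.range (2 * k + 1)).map (fun t => s (N + 1 + t)) with hWdef
  have hWlen : W.length = 2 * k + 1 := by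
    rw [hWdef, List.length_map, List.length_range]
  have hWne : W ≠ [] := by
    intro h
    have := congrArg List.length h
    rw [hWlen] at this
    simp at this
  have hWfac : FactorOf W s := ⟨N + 1, by rw [hWlen]⟩
  have hW : HasPeriod W (k + 1) := by
    refine ⟨by omega, fun t ht => ?_⟩
    rw [hWlen] at ht
    rw [hWdef, get?_factor s (by omega), get?_factor s (by omega)]
    simp only [Option.some.injEq]
    rw [show N + 1 + (t + (k + 1)) = (N + 1 + t) + (k + 1) from by omega]
    exact hblock _ (by omega) (by omega)
  have hub : period W ≤ k + 1 := Nat.sInf_le hW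
  have hne2 : Set.Nonempty {n | HasPeriod W n} := ⟨k + 1, hW⟩
  have hlb : 1 ≤ period W := (Nat.sInf_mem hne2).1
  have hexpW := hfree W hWne hWfac
  unfold exponent at hexpW
  rw [hWlen] at hexpW
  have hpw0 : (0 : ℚ) < (period W : ℚ) := by exact_mod_cast hlb
  rw [div_le_iff₀ hpw0] at hexpW
  have hub' : ((period W : ℕ) : ℚ) ≤ (k : ℚ) + 1 := by exact_mod_cast hub
  have hk1' : (1 : ℚ) ≤ (k : ℚ) := by exact_mod_cast hk1
  push_cast at hexpW
  linarith
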